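/- Let d ≥ 2 and let N be a norm on the d × d complex matrices that is unitarily invariant: N(U*X*V) = N(X) for all unitary matrices U, V. Let F be the diagonal matrix diag(1, 1, 0, …, 0). Then for every d × d complex matrix X, (σ₁(X) + σ₂(X))/2 ≤ N(X)/N(F) ≤ max(σ₁(X), (∑ i, σ_i(X))/2), where σ₁(X) ≥ σ₂(X) ≥ … are the singular values of X. -/

import Mathlib

open Matrix BigOperators

/-- The entries of `v` sorted in non-increasing order: `sortedDesc v 0` is the largest, etc. -/
noncomputable def sortedDesc {d : ℕ} (v : Fin d → ℝ) : Fin d → ℝ :=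
  fun k => v (Tuple.sort v k.rev)

/-- The singular values of `X` in non-increasing order:
`singularValues X 0 = σ₁(X)`, `singularValues X 1 = σ₂(X)`, ... -/
noncomputable def singularValues {d : ℕ} (X : Matrix (Fin d) (Fin d) ℂ) : Fin d → ℝ :=
  sortedDesc fun i => Real.sqrt ((Matrix.isHermitian_conjTranspose_mul_self X).eigenvalues i)

namespace KyFanAux

variable {d : ℕ}

noncomputable def Dg (x : Fin d → ℝ) : Matrix (Fin d) (Fin d) ℂ :=
  Matrix.diagonal (fun i => (x i : ℂ))

lemma Dg_submatrix (x : Fin d → ℝ) (e : Equiv.Perm (Fin d)) :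
    (Dg x).submatrix e e = Dg (x ∘ e) := by
  ext i j
  by_cases h : i = j
  · subst h; simp [Dg]
  · simp [Dg, Matrix.diagonal_apply_ne, h, e.injective.ne h]

lemma Dg_add (x y : Fin d → ℝ) : Dg (x + y) = Dg x + Dg y := by
  ext i j
  by_cases h : i = j
  · subst h; simp [Dg]
  · simp [Dg, Matrix.diagonal_apply_ne, h]

lemma Dg_smul (a : ℝ) (x : Fin d → ℝ) : Dg (a • x) = (a : ℂ) • Dg x := by
  ext i j
  by_cases h : i = j
  · subst h; simp [Dg]
  · simp [Dg, Matrix.diagonal_apply_ne, h]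

section NormBasics

variable (N : Matrix (Fin d) (Fin d) ℂ → ℝ)
  (hN_triangle : ∀ A B : Matrix (Fin d) (Fin d) ℂ, N (A + B) ≤ N A + N B)
  (hN_smul : ∀ (a : ℂ) (A : Matrix (Fin d) (Fin d) ℂ), N (a • A) = ‖a‖ * N A)
  (hN_ui : ∀ U V A : Matrix (Fin d) (Fin d) ℂ,
      Uᴴ * U = 1 → Vᴴ * V = 1 → N (U * A * V) = N A)

include hN_smul in
lemma N_zero : N 0 = 0 := by simpa using hN_smul 0 0

include hN_triangle hN_smul in
lemma N_nonneg (A : Matrix (Fin d) (Fin d) ℂ) : 0 ≤ N A := by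
  have h1 : N ((-1 : ℂ) • A) = N A := by rw [hN_smul]; simp
  have h2 : N (A + (-1 : ℂ) • A) ≤ N A + N ((-1 : ℂ) • A) := hN_triangle _ _
  have h3 : A + (-1 : ℂ) • A = 0 := by simp
  rw [h3, N_zero N hN_smul, h1] at h2
  linarith

include hN_smul in
lemma N_smul_real (a : ℝ) (ha : 0 ≤ a) (A : Matrix (Fin d) (Fin d) ℂ) :
    N ((a : ℂ) • A) = a * N A := by
  rw [hN_smul]; simp [abs_of_nonneg ha]

include hN_ui in
lemma N_submatrix (e : Equiv.Perm (Fin d)) (A : Matrix (Fin d) (Fin d) ℂ) :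
    N (A.submatrix e e) = N A := by
  have key : ((1 : Matrix (Fin d) (Fin d) ℂ).submatrix (⇑e) id) * A
      * ((1 : Matrix (Fin d) (Fin d) ℂ).submatrix id (⇑e)) = A.submatrix e e := by
    ext i j
    simp [Matrix.mul_apply, Matrix.one_apply, Equiv.apply_eq_iff_eq_symm_apply,
      eq_comm (a := i)]
  rw [← key]
  apply hN_ui
  · ext i j
    simp [Matrix.mul_apply, Matrix.one_apply, Equiv.apply_eq_iff_eq_symm_apply]
  · ext i j
    simp [Matrix.mul_apply, Matrix.one_apply, Equiv.apply_eq_iff_eq_symm_apply]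

include hN_ui in
lemma N_Dg_perm (x : Fin d → ℝ) (e : Equiv.Perm (Fin d)) :
    N (Dg (x ∘ e)) = N (Dg x) := by
  rw [← Dg_submatrix, N_submatrix N hN_ui]

include hN_ui in
/-- flipping the sign of one diagonal entry doesn't change the norm -/
lemma N_Dg_flip (x : Fin d → ℝ) (i : Fin d) :
    N (Dg (Function.update x i (-(x i)))) = N (Dg x) := by
  have key : (1 : Matrix (Fin d) (Fin d) ℂ) * Dg x
      * Matrix.diagonal (fun j => if j = i then (-1 : ℂ) else 1)
      = Dg (Function.update x i (-(x i))) := by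
    rw [one_mul]
    ext a b
    by_cases h : a = b
    · subst h
      by_cases h2 : a = i
      · subst h2; simp [Dg, Matrix.diagonal_mul_diagonal]
      · simp only [Dg, Matrix.diagonal_mul_diagonal, Matrix.diagonal_apply_eq,
          Function.update_of_ne h2, if_neg h2, mul_one]
    · simp [Dg, Matrix.diagonal_mul_diagonal, Matrix.diagonal_apply_ne _ h]
  rw [← key]
  apply hN_ui
  · simp
  · ext a b
    by_cases h : a = b
    · subst h; by_cases h2 : a = i <;> simp [Matrix.diagonal_conjTranspose,
        Matrix.diagonal_mul_diagonal, Matrix.one_apply, h2, apply_ite]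
    · simp [Matrix.diagonal_conjTranspose, Matrix.diagonal_mul_diagonal,
        Matrix.diagonal_apply_ne _ h, Matrix.one_apply_ne h]

end NormBasics

end KyFanAux

namespace KyFanAux

section Mono

variable {d : ℕ} (N : Matrix (Fin d) (Fin d) ℂ → ℝ)
  (hN_triangle : ∀ A B : Matrix (Fin d) (Fin d) ℂ, N (A + B) ≤ N A + N B)
  (hN_smul : ∀ (a : ℂ) (A : Matrix (Fin d) (Fin d) ℂ), N (a • A) = ‖a‖ * N A)
  (hN_ui : ∀ U V A : Matrix (Fin d) (Fin d) ℂ,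
      Uᴴ * U = 1 → Vᴴ * V = 1 → N (U * A * V) = N A)

include hN_triangle hN_smul hN_ui in
lemma N_Dg_mono_single (x y : Fin d → ℝ) (i : Fin d)
    (hxy : ∀ j, j ≠ i → x j = y j) (h0 : 0 ≤ x i) (h1 : x i ≤ y i) :
    N (Dg x) ≤ N (Dg y) := by
  by_cases hy : y i = 0
  · have hx : x = y := by
      funext j
      by_cases hj : j = i
      · subst hj; linarith [hxy]
      · exact hxy j hj
    rw [hx]
  · have hypos : 0 < y i := lt_of_le_of_ne (le_trans h0 h1) (Ne.symm hy)
    set t : ℝ := x i / y i with ht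
    have ht0 : 0 ≤ t := div_nonneg h0 hypos.le
    have ht1 : t ≤ 1 := by rw [ht, div_le_one hypos]; exact h1
    set y' : Fin d → ℝ := Function.update y i (-(y i)) with hy'
    have hdecomp : x = ((1 + t) / 2) • y + ((1 - t) / 2) • y' := by
      funext j
      by_cases hj : j = i
      · subst hj
        simp only [Pi.add_apply, Pi.smul_apply, smul_eq_mul, hy', Function.update_self]
        have htx : t * y j = x j := div_mul_cancel₀ (x j) hy
        have : (1 + t) / 2 * y j + (1 - t) / 2 * -(y j) = t * y j := by ring
        rw [this, htx]
      · simp only [Pi.add_apply, Pi.smul_apply, smul_eq_mul, hy', Function.update_of_ne hj,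
          hxy j hj]
        ring
    have c1 : (0:ℝ) ≤ (1 + t) / 2 := by linarith
    have c2 : (0:ℝ) ≤ (1 - t) / 2 := by linarith
    calc N (Dg x) = N ((((1 + t) / 2 : ℝ) : ℂ) • Dg y + (((1 - t) / 2 : ℝ) : ℂ) • Dg y') := by
          rw [hdecomp, Dg_add, Dg_smul, Dg_smul]
      _ ≤ N ((((1 + t) / 2 : ℝ) : ℂ) • Dg y) + N ((((1 - t) / 2 : ℝ) : ℂ) • Dg y') :=
          hN_triangle _ _
      _ = (1 + t) / 2 * N (Dg y) + (1 - t) / 2 * N (Dg y') := by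
          rw [N_smul_real N hN_smul _ c1, N_smul_real N hN_smul _ c2]
      _ = (1 + t) / 2 * N (Dg y) + (1 - t) / 2 * N (Dg y) := by
          rw [hy', N_Dg_flip N hN_ui]
      _ = N (Dg y) := by ring

include hN_triangle hN_smul hN_ui in
lemma N_Dg_mono (x y : Fin d → ℝ) (h0 : ∀ i, 0 ≤ x i) (hle : ∀ i, x i ≤ y i) :
    N (Dg x) ≤ N (Dg y) := by
  classical
  set g : Finset (Fin d) → (Fin d → ℝ) := fun s j => if j ∈ s then y j else x j with hg
  have main : ∀ s : Finset (Fin d), N (Dg x) ≤ N (Dg (g s)) := by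
    intro s
    induction s using Finset.induction_on with
    | empty =>
        have : g ∅ = x := by funext j; simp [hg]
        rw [this]
    | @insert a s ha ih =>
        refine le_trans ih ?_
        have hupd : g (insert a s) = Function.update (g s) a (y a) := by
          funext j
          by_cases hj : j = a
          · subst hj; simp [hg]
          · simp [hg, Function.update_of_ne hj, hj]
        rw [hupd]
        apply N_Dg_mono_single N hN_triangle hN_smul hN_ui _ _ a
        · intro j hj; rw [Function.update_of_ne hj]
        · simp [hg, ha, h0 a]
        · simp [hg, ha]
          exact hle a
  have : g Finset.univ = y := by funext j; simp [hg]
  rw [← this]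
  exact main Finset.univ

end Mono

end KyFanAux

namespace KyFanAux

def Fvec (d : ℕ) : Fin d → ℝ := fun i => if i.val < 2 then 1 else 0

section Key

variable {d : ℕ}

lemma exists_perm_two (hd : 1 < d) (a b : Fin d) (hab : a ≠ b) :
    ∃ e : Equiv.Perm (Fin d), e ⟨0, by omega⟩ = a ∧ e ⟨1, by omega⟩ = b := by
  set i0 : Fin d := ⟨0, by omega⟩
  set i1 : Fin d := ⟨1, by omega⟩
  have h01 : i0 ≠ i1 := by simp [i0, i1, Fin.ext_iff]
  set e1 := Equiv.swap i0 a with he1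
  set b1 := e1.symm b with hb1
  have hb1i0 : b1 ≠ i0 := by
    intro h
    have : e1 i0 = b := by rw [← h, hb1]; simp
    rw [Equiv.swap_apply_left] at this
    exact hab this
  set e2 := Equiv.swap i1 b1 with he2
  refine ⟨e1 * e2, ?_, ?_⟩
  · have h2 : e2 i0 = i0 := Equiv.swap_apply_of_ne_of_ne h01 (Ne.symm hb1i0)
    simp [Equiv.Perm.mul_apply, h2, he1, Equiv.swap_apply_left]
  · have h2 : e2 i1 = b1 := Equiv.swap_apply_left _ _
    simp [Equiv.Perm.mul_apply, h2, hb1]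

variable (N : Matrix (Fin d) (Fin d) ℂ → ℝ)
  (hN_triangle : ∀ A B : Matrix (Fin d) (Fin d) ℂ, N (A + B) ≤ N A + N B)
  (hN_smul : ∀ (a : ℂ) (A : Matrix (Fin d) (Fin d) ℂ), N (a • A) = ‖a‖ * N A)
  (hN_ui : ∀ U V A : Matrix (Fin d) (Fin d) ℂ,
      Uᴴ * U = 1 → Vᴴ * V = 1 → N (U * A * V) = N A)

include hN_triangle hN_smul hN_ui in
lemma N_two_support (hd : 2 ≤ d) (M : ℝ) (x : Fin d → ℝ)
    (h0 : ∀ i, 0 ≤ x i) (hM : ∀ i, x i ≤ M) (a b : Fin d) (hab : a ≠ b)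
    (hsupp : ∀ k, k ≠ a → k ≠ b → x k = 0) :
    N (Dg x) ≤ M * N (Dg (Fvec d)) := by
  have hM0 : 0 ≤ M := le_trans (h0 a) (hM a)
  obtain ⟨e, he0, he1⟩ := exists_perm_two hd a b hab
  rw [← N_Dg_perm N hN_ui x e]
  have hle : ∀ k, (x ∘ e) k ≤ (M • Fvec d) k := by
    intro k
    by_cases hk0 : k = (⟨0, by omega⟩ : Fin d)
    · subst hk0
      simp [Fvec, he0, hM a]
    · by_cases hk1 : k = (⟨1, by omega⟩ : Fin d)
      · subst hk1
        simp [Fvec, he1, hM b]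
      · have hea : e k ≠ a := by rw [← he0]; exact fun h => hk0 (e.injective h)
        have heb : e k ≠ b := by rw [← he1]; exact fun h => hk1 (e.injective h)
        have : (x ∘ e) k = 0 := hsupp _ hea heb
        rw [this]
        simp only [Pi.smul_apply, smul_eq_mul, Fvec]
        positivity
  calc N (Dg (x ∘ e)) ≤ N (Dg (M • Fvec d)) :=
        N_Dg_mono N hN_triangle hN_smul hN_ui _ _ (fun i => h0 (e i)) hle
    _ = M * N (Dg (Fvec d)) := by rw [Dg_smul, N_smul_real N hN_smul _ hM0]

include hN_triangle hN_smul hN_ui in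
lemma N_small (hd : 2 ≤ d) (M : ℝ) (x : Fin d → ℝ)
    (h0 : ∀ i, 0 ≤ x i) (hM : ∀ i, x i ≤ M) (hsum : ∑ i, x i ≤ 2 * M)
    (huniq : ∀ i j : Fin d, (0 < x i ∧ x i < M) → (0 < x j ∧ x j < M) → i = j) :
    N (Dg x) ≤ M * N (Dg (Fvec d)) := by
  classical
  set Supp := Finset.univ.filter (fun i => 0 < x i) with hSupp
  have hcard : Supp.card ≤ 2 := by
    by_contra hc
    push_neg at hc
    set T := Supp.filter (fun i => x i = M) with hT
    set O := Supp.filter (fun i => ¬ x i = M) with hO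
    have hOcard : O.card ≤ 1 := by
      apply Finset.card_le_one.mpr
      intro i hi j hj
      simp only [hO, hSupp, Finset.mem_filter, Finset.mem_univ, true_and] at hi hj
      exact huniq i j ⟨hi.1, lt_of_le_of_ne (hM i) hi.2⟩ ⟨hj.1, lt_of_le_of_ne (hM j) hj.2⟩
    have hpart : T.card + O.card = Supp.card := Finset.card_filter_add_card_filter_not _
    have hTcard : 2 ≤ T.card := by omega
    obtain ⟨a, ha, b, hb, hab⟩ := Finset.one_lt_card.mp hTcard
    have hrest : (Supp \ {a, b}).Nonempty := by
      rw [← Finset.card_pos]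
      have h1 : ({a, b} : Finset (Fin d)).card ≤ 2 := Finset.card_le_two
      have h2 : (Supp \ {a, b}).card ≥ Supp.card - ({a, b} : Finset (Fin d)).card :=
        Finset.le_card_sdiff _ _
      omega
    obtain ⟨c, hc'⟩ := hrest
    rw [Finset.mem_sdiff] at hc'
    obtain ⟨hcS, hcab⟩ := hc'
    simp only [Finset.mem_insert, Finset.mem_singleton, not_or] at hcab
    have hxa : x a = M := (Finset.mem_filter.mp ha).2
    have hxb : x b = M := (Finset.mem_filter.mp hb).2
    have hxc : 0 < x c := by
      have := (Finset.mem_filter.mp ((Finset.mem_filter.mp ha).1)).2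
      have := (Finset.mem_filter.mp hcS).2
      exact this
    have hsub : ({a, b, c} : Finset (Fin d)) ⊆ Finset.univ := Finset.subset_univ _
    have hsum3 : x a + x b + x c ≤ ∑ i, x i := by
      have : ∑ i ∈ ({a, b, c} : Finset (Fin d)), x i ≤ ∑ i, x i :=
        Finset.sum_le_sum_of_subset_of_nonneg hsub (fun i _ _ => h0 i)
      rw [Finset.sum_insert, Finset.sum_insert, Finset.sum_singleton] at this
      · linarith
      · simp only [Finset.mem_singleton]
        exact fun h => hcab.2 h.symm
      · simp only [Finset.mem_insert, Finset.mem_singleton, not_or]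
        exact ⟨hab, fun h => hcab.1 h.symm⟩
    rw [hxa, hxb] at hsum3
    linarith
  obtain ⟨t, hsub, htcard⟩ := Finset.exists_superset_card_eq hcard (by simpa using hd)
  obtain ⟨a, b, hab, hteq⟩ := Finset.card_eq_two.mp htcard
  apply N_two_support N hN_triangle hN_smul hN_ui hd M x h0 hM a b hab
  intro k hka hkb
  by_contra hk
  have hk' : 0 < x k := lt_of_le_of_ne (h0 k) (Ne.symm hk)
  have : k ∈ t := hsub (by simp [hSupp, hk'])
  rw [hteq] at this
  simp only [Finset.mem_insert, Finset.mem_singleton] at this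
  tauto

end Key

end KyFanAux

namespace KyFanAux

section KeyInduction

variable {d : ℕ} (N : Matrix (Fin d) (Fin d) ℂ → ℝ)
  (hN_triangle : ∀ A B : Matrix (Fin d) (Fin d) ℂ, N (A + B) ≤ N A + N B)
  (hN_smul : ∀ (a : ℂ) (A : Matrix (Fin d) (Fin d) ℂ), N (a • A) = ‖a‖ * N A)
  (hN_ui : ∀ U V A : Matrix (Fin d) (Fin d) ℂ,
      Uᴴ * U = 1 → Vᴴ * V = 1 → N (U * A * V) = N A)

include hN_triangle hN_smul hN_ui in
lemma N_key (hd : 2 ≤ d) (M : ℝ) (n : ℕ) :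
    ∀ (x : Fin d → ℝ) (s : Finset (Fin d)),
      (∀ i, 0 ≤ x i) → (∀ i, x i ≤ M) → (∑ i, x i) ≤ 2 * M →
      (∀ k, 0 < x k → x k < M → k ∈ s) → s.card ≤ n →
      N (Dg x) ≤ M * N (Dg (Fvec d)) := by
  induction n with
  | zero =>
      intro x s h0 hM hsum hcov hcard
      apply N_small N hN_triangle hN_smul hN_ui hd M x h0 hM hsum
      intro i j hi hj
      have hs : s = ∅ := Finset.card_eq_zero.mp (Nat.le_antisymm hcard (Nat.zero_le _))
      exact absurd (hs ▸ hcov i hi.1 hi.2) (Finset.notMem_empty i)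
  | succ n ih =>
      intro x s h0 hM hsum hcov hcard
      by_cases hex : ∃ i j : Fin d, i ≠ j ∧ (0 < x i ∧ x i < M) ∧ (0 < x j ∧ x j < M)
      · obtain ⟨i, j, hij, ⟨hi0, hiM⟩, ⟨hj0, hjM⟩⟩ := hex
        have hji : j ≠ i := Ne.symm hij
        set sp := min (M - x i) (x j) with hsp
        set rr := min (x i) (M - x j) with hrr
        have hsppos : 0 < sp := lt_min (by linarith) hj0
        have hrrpos : 0 < rr := lt_min hi0 (by linarith)
        have hspxj : sp ≤ x j := min_le_right _ _
        have hspMi : sp ≤ M - x i := min_le_left _ _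
        have hrrxi : rr ≤ x i := min_le_left _ _
        have hrrMj : rr ≤ M - x j := min_le_right _ _
        set u : Fin d → ℝ :=
          fun k => x k + (if k = i then sp else 0) - (if k = j then sp else 0) with hu
        set v : Fin d → ℝ :=
          fun k => x k - (if k = i then rr else 0) + (if k = j then rr else 0) with hv
        have hui : u i = x i + sp := by simp [hu, hij]
        have huj : u j = x j - sp := by simp [hu, hji]
        have huk : ∀ k, k ≠ i → k ≠ j → u k = x k := by
          intro k h1 h2; simp [hu, h1, h2]
        have hvi : v i = x i - rr := by simp [hv, hij]
        have hvj : v j = x j + rr := by simp [hv, hji]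
        have hvk : ∀ k, k ≠ i → k ≠ j → v k = x k := by
          intro k h1 h2; simp [hv, h1, h2]
        -- bounds for u and v
        have hu0 : ∀ k, 0 ≤ u k := by
          intro k
          by_cases h1 : k = i
          · subst h1; rw [hui]; linarith
          · by_cases h2 : k = j
            · subst h2; rw [huj]; linarith
            · rw [huk k h1 h2]; exact h0 k
        have huM : ∀ k, u k ≤ M := by
          intro k
          by_cases h1 : k = i
          · subst h1; rw [hui]; linarith
          · by_cases h2 : k = j
            · subst h2; rw [huj]; linarith [hM k]
            · rw [huk k h1 h2]; exact hM k
        have hv0 : ∀ k, 0 ≤ v k := by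
          intro k
          by_cases h1 : k = i
          · subst h1; rw [hvi]; linarith
          · by_cases h2 : k = j
            · subst h2; rw [hvj]; linarith
            · rw [hvk k h1 h2]; exact h0 k
        have hvM : ∀ k, v k ≤ M := by
          intro k
          by_cases h1 : k = i
          · subst h1; rw [hvi]; linarith [hM k]
          · by_cases h2 : k = j
            · subst h2; rw [hvj]; linarith
            · rw [hvk k h1 h2]; exact hM k
        -- sums
        have husum : ∑ k, u k = ∑ k, x k := by
          rw [hu]
          rw [Finset.sum_sub_distrib, Finset.sum_add_distrib]
          simp [Finset.sum_ite_eq']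
        have hvsum : ∑ k, v k = ∑ k, x k := by
          rw [hv]
          rw [Finset.sum_add_distrib, Finset.sum_sub_distrib]
          simp [Finset.sum_ite_eq']
        have his : i ∈ s := hcov i hi0 hiM
        have hjs : j ∈ s := hcov j hj0 hjM
        -- covers with one fewer element
        have hucov : ∃ w ∈ s, ∀ k, 0 < u k → u k < M → k ∈ s.erase w := by
          rcases le_total (M - x i) (x j) with h | h
          · refine ⟨i, his, ?_⟩
            intro k hk0 hkM
            have hki : k ≠ i := by
              intro hkeq; subst hkeq
              rw [hui, hsp, min_eq_left h] at hkM
              linarith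
            rw [Finset.mem_erase]
            refine ⟨hki, ?_⟩
            by_cases h2 : k = j
            · subst h2; exact hjs
            · rw [huk k hki h2] at hk0 hkM
              exact hcov k hk0 hkM
          · refine ⟨j, hjs, ?_⟩
            intro k hk0 hkM
            have hkj : k ≠ j := by
              intro hkeq; subst hkeq
              rw [huj, hsp, min_eq_right h] at hk0
              linarith
            rw [Finset.mem_erase]
            refine ⟨hkj, ?_⟩
            by_cases h2 : k = i
            · subst h2; exact his
            · rw [huk k h2 hkj] at hk0 hkM
              exact hcov k hk0 hkM
        have hvcov : ∃ w ∈ s, ∀ k, 0 < v k → v k < M → k ∈ s.erase w := by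
          rcases le_total (x i) (M - x j) with h | h
          · refine ⟨i, his, ?_⟩
            intro k hk0 hkM
            have hki : k ≠ i := by
              intro hkeq; subst hkeq
              rw [hvi, hrr, min_eq_left h] at hk0
              linarith
            rw [Finset.mem_erase]
            refine ⟨hki, ?_⟩
            by_cases h2 : k = j
            · subst h2; exact hjs
            · rw [hvk k hki h2] at hk0 hkM
              exact hcov k hk0 hkM
          · refine ⟨j, hjs, ?_⟩
            intro k hk0 hkM
            have hkj : k ≠ j := by
              intro hkeq; subst hkeq
              rw [hvj, hrr, min_eq_right h] at hkM
              linarith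
            rw [Finset.mem_erase]
            refine ⟨hkj, ?_⟩
            by_cases h2 : k = i
            · subst h2; exact his
            · rw [hvk k h2 hkj] at hk0 hkM
              exact hcov k hk0 hkM
        obtain ⟨wu, hwu, hucov'⟩ := hucov
        obtain ⟨wv, hwv, hvcov'⟩ := hvcov
        have hucard : (s.erase wu).card ≤ n := by
          rw [Finset.card_erase_of_mem hwu]; omega
        have hvcard : (s.erase wv).card ≤ n := by
          rw [Finset.card_erase_of_mem hwv]; omega
        have hNu : N (Dg u) ≤ M * N (Dg (Fvec d)) :=
          ih u (s.erase wu) hu0 huM (by rw [husum]; exact hsum) hucov' hucard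
        have hNv : N (Dg v) ≤ M * N (Dg (Fvec d)) :=
          ih v (s.erase wv) hv0 hvM (by rw [hvsum]; exact hsum) hvcov' hvcard
        -- convex decomposition
        have hrssum : rr + sp ≠ 0 := by positivity
        set lam := rr / (rr + sp) with hlam
        have hlam0 : 0 ≤ lam := by positivity
        have hlam1 : lam ≤ 1 := by
          rw [hlam, div_le_one (by positivity)]; linarith
        have hdec : x = lam • u + (1 - lam) • v := by
          funext k
          simp only [Pi.add_apply, Pi.smul_apply, smul_eq_mul]
          by_cases h1 : k = i
          · subst h1
            rw [hui, hvi, hlam]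
            field_simp
            ring
          · by_cases h2 : k = j
            · subst h2
              rw [huj, hvj, hlam]
              field_simp
              ring
            · rw [huk k h1 h2, hvk k h1 h2]
              ring
        calc N (Dg x) = N (((lam : ℝ) : ℂ) • Dg u + (((1 - lam : ℝ)) : ℂ) • Dg v) := by
              rw [hdec, Dg_add, Dg_smul, Dg_smul]
          _ ≤ N (((lam : ℝ) : ℂ) • Dg u) + N ((((1 - lam : ℝ)) : ℂ) • Dg v) := hN_triangle _ _
          _ = lam * N (Dg u) + (1 - lam) * N (Dg v) := by
              rw [N_smul_real N hN_smul _ hlam0, N_smul_real N hN_smul _ (by linarith)]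
          _ ≤ lam * (M * N (Dg (Fvec d))) + (1 - lam) * (M * N (Dg (Fvec d))) := by
              have := N_nonneg N hN_triangle hN_smul
              nlinarith [hNu, hNv]
          _ = M * N (Dg (Fvec d)) := by ring
      · apply N_small N hN_triangle hN_smul hN_ui hd M x h0 hM hsum
        intro i j hi hj
        by_contra hne
        exact hex ⟨i, j, hne, hi, hj⟩

end KeyInduction

end KyFanAux

namespace KyFanAux

open scoped ComplexOrder

section SVD

variable {d : ℕ}

local notation "⟪" x ", " y "⟫" => @inner ℂ _ _ x y

lemma svd (X : Matrix (Fin d) (Fin d) ℂ) :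
    ∃ U V : Matrix (Fin d) (Fin d) ℂ, Uᴴ * U = 1 ∧ Vᴴ * V = 1 ∧
      X = U * Dg (fun i => Real.sqrt
        ((Matrix.isHermitian_conjTranspose_mul_self X).eigenvalues i)) * V := by
  classical
  set h := Matrix.isHermitian_conjTranspose_mul_self X with hh
  set μ : Fin d → ℝ := h.eigenvalues with hμ
  set σ : Fin d → ℝ := fun i => Real.sqrt (μ i) with hσ
  have hμ0 : ∀ i, 0 ≤ μ i := Matrix.eigenvalues_conjTranspose_mul_self_nonneg X
  set vv : Fin d → (Fin d → ℂ) := fun j => ⇑(h.eigenvectorBasis j) with hvv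
  -- the main inner product computation
  have hmain : ∀ i j, dotProduct (star (X *ᵥ vv i)) (X *ᵥ vv j)
      = (μ j : ℂ) * (if i = j then 1 else 0) := by
    intro i j
    rw [Matrix.star_mulVec, ← dotProduct_mulVec, Matrix.mulVec_mulVec]
    have heig : (Xᴴ * X) *ᵥ vv j = μ j • vv j := h.mulVec_eigenvectorBasis j
    rw [heig, dotProduct_smul]
    have horto : dotProduct (star (vv i)) (vv j) = if i = j then 1 else 0 := by
      have := orthonormal_iff_ite.mp h.eigenvectorBasis.orthonormal i j
      rw [EuclideanSpace.inner_eq_star_dotProduct, dotProduct_comm] at this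
      exact this
    rw [horto]
    simp [Complex.real_smul]
  -- candidate left singular vectors
  set w : Fin d → EuclideanSpace ℂ (Fin d) :=
    fun j => ((σ j : ℂ))⁻¹ • (WithLp.equiv 2 (Fin d → ℂ)).symm (X *ᵥ vv j) with hw
  have hworth : Orthonormal ℂ (({j | σ j ≠ 0} : Set (Fin d)).restrict w) := by
    rw [orthonormal_iff_ite]
    intro ⟨i, hi⟩ ⟨j, hj⟩
    have hinn : ⟪(WithLp.equiv 2 (Fin d → ℂ)).symm (X *ᵥ vv i),
        (WithLp.equiv 2 (Fin d → ℂ)).symm (X *ᵥ vv j)⟫ = (μ j : ℂ) * (if i = j then 1 else 0) := by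
      rw [EuclideanSpace.inner_eq_star_dotProduct]
      have he : ∀ y : Fin d → ℂ, WithLp.equiv 2 (Fin d → ℂ) ((WithLp.equiv 2 (Fin d → ℂ)).symm y) = y :=
        fun y => (WithLp.equiv 2 (Fin d → ℂ)).apply_symm_apply y
      rw [dotProduct_comm]
      exact hmain i j
    have this : ⟪w i, w j⟫ = ((σ i : ℂ))⁻¹ * (((σ j : ℂ))⁻¹ * ((μ j : ℂ) * (if i = j then 1 else 0))) := by
      rw [hw]
      simp only [inner_smul_left, inner_smul_right, map_inv₀, Complex.conj_ofReal, hinn]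
      ring
    change ⟪w i, w j⟫ = _
    rw [this]
    by_cases hij : (⟨i, hi⟩ : {j | σ j ≠ 0}) = ⟨j, hj⟩
    · have hij' : i = j := by simpa using hij
      subst hij'
      simp only [if_pos rfl, hij, if_pos rfl, mul_one]
      have hσi : (σ i : ℝ) ≠ 0 := hi
      have hμi : μ i = σ i * σ i := (Real.mul_self_sqrt (hμ0 i)).symm
      rw [hμi]
      push_cast
      field_simp
    · have hij' : i ≠ j := by
        intro hc; exact hij (by simp [hc])
      simp [hij', if_neg hij]
  obtain ⟨b, hb⟩ := hworth.exists_orthonormalBasis_extension_of_card_eq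
    (by simp [finrank_euclideanSpace])
  set U : Matrix (Fin d) (Fin d) ℂ := Matrix.of fun k j => b j k with hU
  set V : Matrix (Fin d) (Fin d) ℂ := (h.eigenvectorUnitary : Matrix (Fin d) (Fin d) ℂ) with hV
  have hUU : Uᴴ * U = 1 := by
    ext i j
    have := orthonormal_iff_ite.mp b.orthonormal i j
    rw [EuclideanSpace.inner_eq_star_dotProduct, dotProduct_comm] at this
    simp only [Matrix.mul_apply, Matrix.conjTranspose_apply, hU, Matrix.of_apply]
    rw [Matrix.one_apply]
    convert this using 1
    rfl
  have hVV : Vᴴ * V = 1 := by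
    rw [← Matrix.star_eq_conjTranspose]
    exact Matrix.mem_unitaryGroup_iff'.mp (h.eigenvectorUnitary).2
  have hVV' : V * Vᴴ = 1 := by
    rw [← Matrix.star_eq_conjTranspose]
    exact Matrix.mem_unitaryGroup_iff.mp (h.eigenvectorUnitary).2
  -- the column identity
  have hcol : ∀ j, X *ᵥ vv j = fun k => (σ j : ℂ) * b j k := by
    intro j
    by_cases hσj : σ j ≠ 0
    · have hbj : b j = w j := hb j hσj
      funext k
      rw [hbj, hw]
      simp only [PiLp.smul_apply, smul_eq_mul]
      have : ((WithLp.equiv 2 (Fin d → ℂ)).symm (X *ᵥ vv j)) k = (X *ᵥ vv j) k := rfl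
      rw [this, ← mul_assoc, mul_inv_cancel₀ (by exact_mod_cast hσj), one_mul]
    · push_neg at hσj
      have hμj : μ j = 0 := by
        have := Real.sqrt_eq_zero (hμ0 j) |>.mp hσj
        exact this
      have hzero : X *ᵥ vv j = 0 := by
        apply dotProduct_star_self_eq_zero.mp
        rw [hmain j j, hμj]
        simp
      rw [hzero]
      funext k
      rw [hσj]
      simp
  have hXV : X * V = U * Dg σ := by
    ext k j
    have hl : (X * V) k j = (X *ᵥ vv j) k := by
      simp only [Matrix.mul_apply, Matrix.mulVec, dotProduct, hV, hvv]
      congr 1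
    have hr : (U * Dg σ) k j = (σ j : ℂ) * b j k := by
      rw [Dg, Matrix.mul_diagonal]
      simp only [hU, Matrix.of_apply]
      ring
    rw [hl, hr, hcol j]
  refine ⟨U, Vᴴ, hUU, ?_, ?_⟩
  · rw [Matrix.conjTranspose_conjTranspose]
    exact hVV'
  · rw [← hXV, mul_assoc, hVV', mul_one]

end SVD

end KyFanAux

/-- For a unitarily invariant norm `N` on `d × d` complex matrices, with
`F = diag(1,1,0,…,0)`, every matrix `X` satisfies
`(σ₁(X) + σ₂(X))/2 ≤ N(X)/N(F) ≤ max(σ₁(X), (∑ i, σᵢ(X))/2)`. -/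
theorem ui_norm_kyfan_bounds (d : ℕ) (hd : 2 ≤ d)
    (N : Matrix (Fin d) (Fin d) ℂ → ℝ)
    (hN_triangle : ∀ A B : Matrix (Fin d) (Fin d) ℂ, N (A + B) ≤ N A + N B)
    (hN_smul : ∀ (a : ℂ) (A : Matrix (Fin d) (Fin d) ℂ), N (a • A) = ‖a‖ * N A)
    (hN_pos : ∀ A : Matrix (Fin d) (Fin d) ℂ, A ≠ 0 → 0 < N A)
    (hN_ui : ∀ U V A : Matrix (Fin d) (Fin d) ℂ,
      Uᴴ * U = 1 → Vᴴ * V = 1 → N (U * A * V) = N A)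
    (X : Matrix (Fin d) (Fin d) ℂ)
    (F : Matrix (Fin d) (Fin d) ℂ)
    (hF : F = Matrix.diagonal (fun i : Fin d => if i.val < 2 then (1 : ℂ) else 0)) :
    (singularValues X ⟨0, by omega⟩ + singularValues X ⟨1, by omega⟩) / 2 ≤ N X / N F
    ∧ N X / N F ≤ max (singularValues X ⟨0, by omega⟩) ((∑ i, singularValues X i) / 2) := by
  classical
  open KyFanAux in
  set i0 : Fin d := ⟨0, by omega⟩ with hi0
  set i1 : Fin d := ⟨1, by omega⟩ with hi1
  have h01 : i0 ≠ i1 := by simp [hi0, hi1, Fin.ext_iff]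
  -- F as a real diagonal
  have hFDg : F = Dg (Fvec d) := by
    rw [hF]
    ext i j
    by_cases h : i = j
    · subst h; by_cases h2 : i.val < 2 <;> simp [Dg, Fvec, h2, apply_ite]
    · simp [Dg, Matrix.diagonal_apply_ne _ h]
  -- F is nonzero, so N F > 0
  have hFne : F ≠ 0 := by
    intro hzero
    have : F i0 i0 = 0 := by rw [hzero]; rfl
    rw [hF] at this
    simp [hi0, Matrix.diagonal_apply_eq] at this
  have hNF : 0 < N F := hN_pos F hFne
  -- singular values
  set sv : Fin d → ℝ :=
    fun i => Real.sqrt ((Matrix.isHermitian_conjTranspose_mul_self X).eigenvalues i) with hsv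
  set σ : Fin d → ℝ := singularValues X with hσdef
  have hσ0 : ∀ k, 0 ≤ σ k := by
    intro k
    rw [hσdef]
    exact Real.sqrt_nonneg _
  have hσanti : ∀ k l : Fin d, k ≤ l → σ l ≤ σ k := by
    intro k l hkl
    have := Tuple.monotone_sort sv
    have h1 : l.rev ≤ k.rev := by
      rw [Fin.rev_le_rev]
      exact hkl
    exact this h1
  -- N X = N (Dg σ)
  obtain ⟨U, V, hU, hV, hXUV⟩ := svd X
  have hNX1 : N X = N (Dg sv) := by
    rw [hXUV]
    exact hN_ui U V _ hU hV
  have hσcomp : σ = sv ∘ (Fin.revPerm.trans (Tuple.sort sv)) := by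
    funext k
    simp [hσdef, singularValues, sortedDesc, hsv]
  have hNX : N X = N (Dg σ) := by
    rw [hNX1, hσcomp, N_Dg_perm N hN_ui sv _]
  constructor
  · -- lower bound
    set c : ℝ := (σ i0 + σ i1) / 2 with hc
    have hc0 : 0 ≤ c := by
      have := hσ0 i0; have := hσ0 i1; rw [hc]; linarith
    set y : Fin d → ℝ := fun k => if k = i0 then σ i0 else if k = i1 then σ i1 else 0 with hy
    have hdec : c • Fvec d = (1/2 : ℝ) • (y + y ∘ (Equiv.swap i0 i1)) := by
      funext k
      simp only [Pi.smul_apply, Pi.add_apply, Function.comp_apply, smul_eq_mul]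
      by_cases h1 : k = i0
      · subst h1
        rw [hy]
        simp only [Equiv.swap_apply_left, if_pos rfl, if_neg (Ne.symm h01), if_pos rfl]
        have : (i0 : Fin d).val < 2 := by simp [hi0]
        rw [Fvec, if_pos this, hc]
        simp only [if_true]
        ring
      · by_cases h2 : k = i1
        · subst h2
          rw [hy]
          simp only [Equiv.swap_apply_right, if_neg h01, if_pos rfl, if_neg (Ne.symm h01)]
          have : (i1 : Fin d).val < 2 := by simp [hi1]
          rw [Fvec, if_pos this, hc]
          simp only [if_true]
          ring
        · have hswap : Equiv.swap i0 i1 k = k := Equiv.swap_apply_of_ne_of_ne h1 h2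
          rw [hy, hswap]
          simp only [if_neg h1, if_neg h2]
          have : ¬ (k : Fin d).val < 2 := by
            intro hlt
            interval_cases h : k.val
            · exact h1 (by simp [hi0, Fin.ext_iff, h])
            · exact h2 (by simp [hi1, Fin.ext_iff, h])
          rw [Fvec, if_neg this]
          ring
    have hyle : ∀ k, y k ≤ σ k := by
      intro k
      rw [hy]
      by_cases h1 : k = i0
      · subst h1; simp
      · by_cases h2 : k = i1
        · subst h2; simp [h1]
        · simp only [if_neg h1, if_neg h2]; exact hσ0 k
    have hy0 : ∀ k, 0 ≤ y k := by
      intro k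
      rw [hy]
      by_cases h1 : k = i0
      · subst h1; simp [hσ0 i0]
      · by_cases h2 : k = i1
        · subst h2; simp [h1, hσ0 i1]
        · simp [if_neg h1, if_neg h2]
    have step1 : N (Dg (c • Fvec d)) ≤ N (Dg y) := by
      rw [hdec, Dg_smul, Dg_add]
      calc N (((1/2 : ℝ) : ℂ) • (Dg y + Dg (y ∘ (Equiv.swap i0 i1))))
          = (1/2 : ℝ) * N (Dg y + Dg (y ∘ (Equiv.swap i0 i1))) :=
            N_smul_real N hN_smul _ (by norm_num) _
        _ ≤ (1/2 : ℝ) * (N (Dg y) + N (Dg (y ∘ (Equiv.swap i0 i1)))) := by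
            have := hN_triangle (Dg y) (Dg (y ∘ (Equiv.swap i0 i1)))
            linarith
        _ = N (Dg y) := by
            rw [N_Dg_perm N hN_ui y (Equiv.swap i0 i1)]
            ring
    have step2 : N (Dg y) ≤ N (Dg σ) :=
      N_Dg_mono N hN_triangle hN_smul hN_ui y σ hy0 hyle
    have hleft : c * N F ≤ N X := by
      have : N (Dg (c • Fvec d)) = c * N F := by
        rw [Dg_smul, N_smul_real N hN_smul _ hc0, hFDg]
      rw [← this, hNX]
      exact le_trans step1 step2
    rw [le_div_iff₀ hNF]
    exact hleft
  · -- upper bound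
    set M : ℝ := max (σ i0) ((∑ i, σ i) / 2) with hM
    have hσM : ∀ k, σ k ≤ M := by
      intro k
      have h1 : σ k ≤ σ i0 := hσanti i0 k (by simp [hi0, Fin.le_def])
      exact le_trans h1 (le_max_left _ _)
    have hsumM : ∑ i, σ i ≤ 2 * M := by
      have : (∑ i, σ i) / 2 ≤ M := le_max_right _ _
      linarith
    have hkey : N (Dg σ) ≤ M * N (Dg (Fvec d)) :=
      N_key N hN_triangle hN_smul hN_ui hd M d σ Finset.univ hσ0 hσM hsumM
        (fun k _ _ => Finset.mem_univ k) (by simp)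
    rw [div_le_iff₀ hNF]
    rw [hNX]
    rw [hFDg]
    exact hkey
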